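/- arXiv:2308.04565 — 7 statements merged into one kernel-verified Lean document; each statement's English description precedes it below -/
import Mathlib

section
/- Fix α ∈ (0,1), κ > 0, and η > 0. Then there exists a natural number J₀, depending only on α, κ, and η, such that for every nonincreasing sequence (a_i)_{i∈ℕ} of nonnegative real numbers with ∑_{i∈ℕ} a_i = 1 and such that the sequence (a_i^α) is summable with ∑_{i∈ℕ} a_i^α ≤ κ, one has ∑_{i=0}^{J₀-1} a_i ≥ 1 − η. -/
/-- Lemma 5.1 ("concavity lemma"): for `α ∈ (0,1)`, `κ > 0`, `η > 0` there is `J₀ ∈ ℕ`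
such that every nonincreasing sequence of nonnegative reals summing to `1`, with
`∑ a_i^α ≤ κ`, satisfies `∑_{i<J₀} a_i ≥ 1 - η`. -/
theorem stmt_0 (α κ η : ℝ) (hα₀ : 0 < α) (hα₁ : α < 1) (hκ : 0 < κ) (hη : 0 < η) :
    ∃ J₀ : ℕ, ∀ a : ℕ → ℝ,
      (∀ i, 0 ≤ a i) →
      (∀ i j, i ≤ j → a j ≤ a i) →
      Summable a →
      (∑' i, a i) = 1 →
      Summable (fun i => a i ^ α) →
      (∑' i, a i ^ α) ≤ κ →
      1 - η ≤ ∑ i ∈ Finset.range J₀, a i := by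
  obtain ⟨J₀, hJ⟩ := exists_nat_gt ((κ / η) ^ (1 / (1 - α)))
  have h1α : (0:ℝ) < 1 - α := by linarith
  have hdiv : (0:ℝ) < κ / η := div_pos hκ hη
  -- (J₀+1)^(1-α) ≥ κ/η
  have hJpos : (0:ℝ) < (J₀ : ℝ) + 1 := by positivity
  have hpow : κ / η ≤ ((J₀ : ℝ) + 1) ^ (1 - α) := by
    have h0 : (κ / η) ^ (1 / (1 - α)) ≤ (J₀ : ℝ) + 1 := by
      have : (J₀ : ℝ) ≤ (J₀ : ℝ) + 1 := by linarith
      linarith [hJ.le]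
    have h1 : ((κ / η) ^ (1 / (1 - α))) ^ (1 - α) ≤ ((J₀ : ℝ) + 1) ^ (1 - α) :=
      Real.rpow_le_rpow (Real.rpow_nonneg hdiv.le _) h0 h1α.le
    rwa [← Real.rpow_mul hdiv.le, one_div_mul_cancel h1α.ne', Real.rpow_one] at h1
  set C : ℝ := (1 / ((J₀ : ℝ) + 1)) ^ (1 - α) with hC
  have hCval : C = (((J₀ : ℝ) + 1) ^ (1 - α))⁻¹ := by
    rw [hC, one_div, Real.inv_rpow hJpos.le]
  have hCnonneg : 0 ≤ C := Real.rpow_nonneg (by positivity) _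
  have hCκ : κ * C ≤ η := by
    rw [hCval]
    have hbpos : (0:ℝ) < ((J₀ : ℝ) + 1) ^ (1 - α) := Real.rpow_pos_of_pos hJpos _
    rw [mul_inv_le_iff₀ hbpos]
    calc κ = (κ / η) * η := by field_simp
    _ ≤ ((J₀ : ℝ) + 1) ^ (1 - α) * η := by
        exact mul_le_mul_of_nonneg_right hpow hη.le
    _ = η * ((J₀ : ℝ) + 1) ^ (1 - α) := mul_comm _ _
  refine ⟨J₀, fun a ha hmono hsum htsum hsumα htα => ?_⟩
  -- a i ≤ 1/(i+1)
  have hbound : ∀ i : ℕ, a i ≤ 1 / ((i : ℝ) + 1) := by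
    intro i
    have hipos : (0:ℝ) < (i : ℝ) + 1 := by positivity
    have h1 : ((i : ℝ) + 1) * a i ≤ ∑ j ∈ Finset.range (i + 1), a j := by
      have := Finset.sum_le_sum (f := fun _ : ℕ => a i) (g := a)
        (s := Finset.range (i + 1)) (fun j hj => hmono j i (by
          simpa [Nat.lt_succ_iff] using Finset.mem_range.mp hj))
      simpa [Finset.sum_const, Finset.card_range, nsmul_eq_mul, add_comm, mul_comm] using this
    have h2 : ∑ j ∈ Finset.range (i + 1), a j ≤ 1 := by
      rw [← htsum]
      exact Summable.sum_le_tsum _ (fun j _ => ha j) hsum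
    rw [le_div_iff₀ hipos]
    calc a i * ((i : ℝ) + 1) = ((i : ℝ) + 1) * a i := mul_comm _ _
    _ ≤ 1 := le_trans h1 h2
  -- pointwise tail bound
  have hterm : ∀ i : ℕ, a (J₀ + i) ≤ a (J₀ + i) ^ α * C := by
    intro i
    have hn := ha (J₀ + i)
    have key : a (J₀ + i) = a (J₀ + i) ^ α * a (J₀ + i) ^ (1 - α) := by
      rw [← Real.rpow_add' hn (by norm_num)]
      norm_num
    nth_rewrite 1 [key]
    apply mul_le_mul_of_nonneg_left _ (Real.rpow_nonneg hn _)
    have h1 : a (J₀ + i) ≤ 1 / ((J₀ : ℝ) + 1) := by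
      refine le_trans (hbound (J₀ + i)) ?_
      apply div_le_div_of_nonneg_left one_pos.le hJpos
      push_cast; linarith [Nat.cast_nonneg (α := ℝ) i]
    exact Real.rpow_le_rpow hn h1 h1α.le
  -- summability of tails
  have hsumtail : Summable (fun i => a (J₀ + i)) := by
    have := (summable_nat_add_iff J₀).2 hsum
    simpa [add_comm] using this
  have hsumαtail : Summable (fun i => a (J₀ + i) ^ α) := by
    have := (summable_nat_add_iff (f := fun i => a i ^ α) J₀).2 hsumα
    simpa [add_comm] using this
  -- tail of a^α is ≤ κ
  have htailα : (∑' i, a (J₀ + i) ^ α) ≤ κ := by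
    refine le_trans ?_ htα
    have h := (Summable.sum_add_tsum_nat_add (f := fun i => a i ^ α) J₀ hsumα).symm
    have hpos : 0 ≤ ∑ i ∈ Finset.range J₀, a i ^ α :=
      Finset.sum_nonneg fun i _ => Real.rpow_nonneg (ha i) _
    have : (∑' i, a (i + J₀) ^ α) ≤ ∑' i, a i ^ α := by
      rw [← Summable.sum_add_tsum_nat_add (f := fun i => a i ^ α) J₀ hsumα]
      linarith
    simpa [add_comm] using this
  -- tail of a is ≤ η
  have htail : (∑' i, a (J₀ + i)) ≤ η := by
    calc (∑' i, a (J₀ + i)) ≤ ∑' i, a (J₀ + i) ^ α * C :=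
          Summable.tsum_le_tsum hterm hsumtail (hsumαtail.mul_right C)
    _ = (∑' i, a (J₀ + i) ^ α) * C := tsum_mul_right
    _ ≤ κ * C := mul_le_mul_of_nonneg_right htailα hCnonneg
    _ ≤ η := hCκ
  -- conclude
  have hsplit := Summable.sum_add_tsum_nat_add (f := a) J₀ hsum
  rw [htsum] at hsplit
  have : (∑' i, a (i + J₀)) ≤ η := by simpa [add_comm] using htail
  linarith
end

section
/- Let n ≥ 1, let δ > 0, R > 0, let x₁, …, x_J be finitely many points of ℝⁿ, and let Ω ⊆ ℝⁿ be a Lebesgue-measurable set such that the Lebesgue measure of Ω \ ⋃_{i=1}^{J} B(x_i, R) is strictly less than ω_n δⁿ. Then Ω \ ⋃_{i=1}^{J} B(x_i, R+δ) ⊆ {x ∈ ℝⁿ : dist(x, ∂Ω) < δ}, where ∂Ω denotes the topological boundary (frontier) of Ω. -/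
open MeasureTheory Metric

/-- Euclidean case of Lemma 4.5 (containment lemma): if the volume of `Ω` outside the
union of balls `B(xᵢ, R)` is less than `ωₙ δⁿ`, then every point of `Ω` outside the
enlarged balls `B(xᵢ, R + δ)` lies within distance `δ` of the boundary of `Ω`. -/
theorem stmt_2 (n : ℕ) (hn : 1 ≤ n) (δ R : ℝ) (hδ : 0 < δ) (hR : 0 < R)
    (J : ℕ) (x : Fin J → EuclideanSpace ℝ (Fin n))
    (Ω : Set (EuclideanSpace ℝ (Fin n))) (hΩ : MeasurableSet Ω)
    (hvol : volume (Ω \ ⋃ i, ball (x i) R)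
      < volume (ball (0 : EuclideanSpace ℝ (Fin n)) 1) * ENNReal.ofReal (δ ^ n)) :
    Ω \ (⋃ i, ball (x i) (R + δ)) ⊆ {y | infDist y (frontier Ω) < δ} := by
  haveI : Nontrivial (EuclideanSpace ℝ (Fin n)) := by
    have : 0 < n := hn
    exact ⟨⟨EuclideanSpace.single ⟨0, this⟩ (1 : ℝ), 0, by
      intro h
      have := congrArg (fun v : EuclideanSpace ℝ (Fin n) => v ⟨0, this⟩) h
      simp [EuclideanSpace.single] at this⟩⟩
  rintro y ⟨hyΩ, hyB⟩
  by_contra hlt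
  simp only [Set.mem_setOf_eq, not_lt] at hlt
  -- no point of ball y δ is on the frontier
  have hfr : ∀ z ∈ ball y δ, z ∉ frontier Ω := by
    intro z hz hzf
    have : infDist y (frontier Ω) ≤ dist y z := infDist_le_dist_of_mem hzf
    rw [dist_comm] at this
    exact absurd (lt_of_le_of_lt hlt (lt_of_le_of_lt this hz)) (lt_irrefl _)
  -- y is in the interior of Ω
  have hyint : y ∈ interior Ω := by
    have hyc : y ∈ closure Ω := subset_closure hyΩ
    by_contra h
    exact hfr y (mem_ball_self hδ) ⟨hyc, h⟩
  -- ball y δ ⊆ interior Ω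
  have hball : ball y δ ⊆ interior Ω := by
    apply (convex_ball y δ).isPreconnected.subset_of_closure_inter_subset isOpen_interior
      ⟨y, mem_ball_self hδ, hyint⟩
    rintro z ⟨hz1, hz2⟩
    by_contra h
    exact hfr z hz2 ⟨closure_mono interior_subset hz1, h⟩
  -- ball y δ is disjoint from each ball (x i) R
  have hdisj : ball y δ ⊆ Ω \ ⋃ i, ball (x i) R := by
    intro z hz
    refine ⟨interior_subset (hball hz), ?_⟩
    simp only [Set.mem_iUnion, mem_ball, not_exists, not_lt]
    intro i
    have hy : R + δ ≤ dist y (x i) := by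
      by_contra h
      exact hyB (Set.mem_iUnion.2 ⟨i, by simpa [mem_ball] using lt_of_not_ge h⟩)
    have := dist_triangle y z (x i)
    have hzy : dist y z < δ := mem_ball'.mp hz
    linarith
  have hvol2 : volume (ball y δ)
      = volume (ball (0 : EuclideanSpace ℝ (Fin n)) 1) * ENNReal.ofReal (δ ^ n) := by
    rw [Measure.addHaar_ball volume y hδ.le, finrank_euclideanSpace_fin, mul_comm]
  exact absurd (lt_of_le_of_lt (hvol2 ▸ measure_mono hdisj) hvol) (lt_irrefl _)
end

section
/- Let n ≥ 1, c₀ ∈ (0,1), r₀ > 0, and R₀ > 0. Let E and E_i (i ∈ ℕ) be Lebesgue-measurable subsets of the closed ball of radius R₀ centered at the origin in ℝⁿ, each having nonempty topological boundary, and suppose: (i) the Lebesgue measure of the symmetric difference E_i Δ E tends to 0 as i → ∞; (ii) for every i, every x ∈ ∂E_i, and every r ∈ (0, r₀), one has c₀ ω_n rⁿ ≤ |E_i ∩ B(x,r)| ≤ (1 − c₀) ω_n rⁿ; (iii) for every x ∈ ∂E and every r > 0, one has 0 < |E ∩ B(x,r)| < |B(x,r)|. Then the Hausdorff distance between ∂E_i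 and ∂E tends to 0 as i → ∞. -/
open MeasureTheory Metric Filter Set
open scoped ENNReal Topology

/-- A ball disjoint from the frontier of `S` lies in the interior of `S` or of `Sᶜ`. -/
lemma ball_dichotomy' {n : ℕ} (S : Set (EuclideanSpace ℝ (Fin n)))
    (x : EuclideanSpace ℝ (Fin n)) (ε : ℝ)
    (h : ball x ε ∩ frontier S = ∅) :
    ball x ε ⊆ interior S ∨ ball x ε ⊆ interior Sᶜ := by
  refine IsPreconnected.subset_or_subset isOpen_interior isOpen_interior ?_ ?_
    (convex_ball x ε).isPreconnected
  · exact disjoint_of_subset interior_subset interior_subset disjoint_compl_right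
  · intro y hy
    have : y ∉ frontier S := fun hf => (eq_empty_iff_forall_notMem.1 h) y ⟨hy, hf⟩
    rw [← compl_frontier_eq_union_interior]
    exact this

/-- Step 3 of the proof of Theorem 5.3: uniform volume density estimates upgrade `L¹`
convergence of sets to Hausdorff convergence of their boundaries. -/
theorem stmt_4 (n : ℕ) (hn : 1 ≤ n) (c₀ r₀ R₀ : ℝ)
    (hc₀ : 0 < c₀) (hc₀' : c₀ < 1) (hr₀ : 0 < r₀) (hR₀ : 0 < R₀)
    (E : Set (EuclideanSpace ℝ (Fin n))) (Ei : ℕ → Set (EuclideanSpace ℝ (Fin n)))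
    (hEsub : E ⊆ closedBall (0 : EuclideanSpace ℝ (Fin n)) R₀)
    (hEisub : ∀ i, Ei i ⊆ closedBall (0 : EuclideanSpace ℝ (Fin n)) R₀)
    (hEmeas : MeasurableSet E) (hEimeas : ∀ i, MeasurableSet (Ei i))
    (hfrE : (frontier E).Nonempty) (hfrEi : ∀ i, (frontier (Ei i)).Nonempty)
    (hL1 : Tendsto (fun i => volume (symmDiff (Ei i) E)) atTop (nhds 0))
    (hdens : ∀ i, ∀ x ∈ frontier (Ei i), ∀ r : ℝ, 0 < r → r < r₀ →
      c₀ * (volume (ball (0 : EuclideanSpace ℝ (Fin n)) 1)).toReal * r ^ n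
          ≤ (volume (Ei i ∩ ball x r)).toReal ∧
      (volume (Ei i ∩ ball x r)).toReal
          ≤ (1 - c₀) * (volume (ball (0 : EuclideanSpace ℝ (Fin n)) 1)).toReal * r ^ n)
    (hEdens : ∀ x ∈ frontier E, ∀ r : ℝ, 0 < r →
      0 < volume (E ∩ ball x r) ∧ volume (E ∩ ball x r) < volume (ball x r)) :
    Tendsto (fun i => hausdorffDist (frontier (Ei i)) (frontier E)) atTop (nhds 0) := by
  classical
  haveI : Nonempty (Fin n) := ⟨⟨0, hn⟩⟩
  haveI hnt : Nontrivial (EuclideanSpace ℝ (Fin n)) := inferInstance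
  set ω : ℝ := (volume (ball (0 : EuclideanSpace ℝ (Fin n)) 1)).toReal with hωdef
  have hωpos : 0 < ω := by
    refine ENNReal.toReal_pos ?_ (measure_ball_lt_top.ne)
    exact (measure_ball_pos volume 0 one_pos).ne'
  -- volume of balls
  have hballvol : ∀ (x : EuclideanSpace ℝ (Fin n)) (r : ℝ), 0 ≤ r →
      volume (ball x r) = ENNReal.ofReal (r ^ n) * volume (ball (0 : EuclideanSpace ℝ (Fin n)) 1) := by
    intro x r hr
    rw [Measure.addHaar_ball volume x hr, finrank_euclideanSpace_fin]
  -- finiteness of symmDiff volume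
  have hsdfin : ∀ i, volume (symmDiff (Ei i) E) < ⊤ := by
    intro i
    refine lt_of_le_of_lt (measure_mono ?_) (measure_closedBall_lt_top (x := (0:EuclideanSpace ℝ (Fin n))) (r := R₀))
    rw [Set.symmDiff_def]
    exact Set.union_subset (fun y hy => hEisub i hy.1) (fun y hy => hEsub hy.1)
  -- Key estimate (a): if x ∈ ∂Ei and ball x ε misses ∂E, the symmetric difference is big.
  have keyA : ∀ (i : ℕ) (x : EuclideanSpace ℝ (Fin n)) (ε : ℝ), 0 < ε →
      x ∈ frontier (Ei i) → ball x ε ∩ frontier E = ∅ →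
      ENNReal.ofReal (c₀ * ω * (min (ε/2) (r₀/2)) ^ n) ≤ volume (symmDiff (Ei i) E) := by
    intro i x ε hε hx hdisj
    set δ : ℝ := min (ε/2) (r₀/2) with hδdef
    have hδpos : 0 < δ := lt_min (by linarith) (by linarith)
    have hδr₀ : δ < r₀ := (min_le_right _ _).trans_lt (by linarith)
    have hBsub : ball x δ ⊆ ball x ε :=
      ball_subset_ball ((min_le_left _ _).trans (by linarith))
    have hvolB : (volume (ball x δ)).toReal = δ ^ n * ω := by
      rw [hballvol x δ hδpos.le, ENNReal.toReal_mul, ENNReal.toReal_ofReal (by positivity)]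
    obtain ⟨h1, h2⟩ := hdens i x hx δ hδpos hδr₀
    have hfinEiB : volume (Ei i ∩ ball x δ) ≠ ⊤ :=
      (lt_of_le_of_lt (measure_mono Set.inter_subset_right) measure_ball_lt_top).ne
    rcases ball_dichotomy' E x ε hdisj with hcase | hcase
    · -- ball ⊆ interior E : then ball x δ \ Ei ⊆ E \ Ei has big measure
      have hsub : ball x δ \ Ei i ⊆ E \ Ei i := by
        intro y hy
        exact ⟨interior_subset (hcase (hBsub hy.1)), hy.2⟩
      have hmeas : volume (ball x δ \ Ei i) = volume (ball x δ) - volume (Ei i ∩ ball x δ) := by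
        have : ball x δ \ (Ei i ∩ ball x δ) = ball x δ \ Ei i := by
          ext y; simp (config := {contextual := true}) [and_comm]
        rw [← this]
        exact measure_diff Set.inter_subset_right ((hEimeas i).inter measurableSet_ball).nullMeasurableSet hfinEiB
      have hfinD : volume (ball x δ \ Ei i) ≠ ⊤ :=
        (lt_of_le_of_lt (measure_mono Set.diff_subset) measure_ball_lt_top).ne
      have htr : (volume (ball x δ \ Ei i)).toReal = δ ^ n * ω - (volume (Ei i ∩ ball x δ)).toReal := by
        rw [hmeas, ENNReal.toReal_sub_of_le (measure_mono Set.inter_subset_right) measure_ball_lt_top.ne, hvolB]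
      calc ENNReal.ofReal (c₀ * ω * δ ^ n)
          ≤ volume (ball x δ \ Ei i) := by
            rw [← ENNReal.ofReal_toReal hfinD]
            exact ENNReal.ofReal_le_ofReal (by nlinarith [h2, htr])
        _ ≤ volume (E \ Ei i) := measure_mono hsub
        _ ≤ volume (symmDiff (Ei i) E) := measure_mono (by rw [Set.symmDiff_def]; exact Set.subset_union_right)
    · -- ball ⊆ interior Eᶜ : then Ei ∩ ball ⊆ Ei \ E
      have hsub : Ei i ∩ ball x δ ⊆ Ei i \ E := by
        intro y hy
        refine ⟨hy.1, fun hyE => ?_⟩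
        exact (interior_subset (hcase (hBsub hy.2)) : y ∈ Eᶜ) hyE
      calc ENNReal.ofReal (c₀ * ω * δ ^ n)
          ≤ volume (Ei i ∩ ball x δ) := by
            rw [← ENNReal.ofReal_toReal hfinEiB]
            exact ENNReal.ofReal_le_ofReal (by nlinarith [h1])
        _ ≤ volume (Ei i \ E) := measure_mono hsub
        _ ≤ volume (symmDiff (Ei i) E) := measure_mono (by rw [Set.symmDiff_def]; exact Set.subset_union_left)
  -- compactness of frontier E
  have hEcpt : IsCompact (frontier E) := by
    refine (isCompact_closedBall (0 : EuclideanSpace ℝ (Fin n)) R₀).of_isClosed_subset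
      isClosed_frontier ?_
    exact (frontier_subset_closure).trans (closure_minimal hEsub isClosed_closedBall)
  -- main eventual bound
  have main : ∀ ε : ℝ, 0 < ε → ∀ᶠ i in atTop,
      hausdorffDist (frontier (Ei i)) (frontier E) ≤ ε := by
    intro ε hε
    set δ : ℝ := min (ε/2) (r₀/2) with hδdef
    have hδpos : 0 < δ := lt_min (by linarith) (by linarith)
    have hApos : (0 : ℝ≥0∞) < ENNReal.ofReal (c₀ * ω * δ ^ n) := by
      rw [ENNReal.ofReal_pos]; positivity
    -- finite subcover of frontier E
    obtain ⟨t, htsub, htcov⟩ := hEcpt.elim_nhds_subcover (fun y => ball y (ε/2))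
      (fun y _ => ball_mem_nhds y (by linarith))
    have hab : ∀ y ∈ t, 0 < min (volume (E ∩ ball y (ε/2))) (volume (ball y (ε/2) \ E)) := by
      intro y hy
      obtain ⟨ha, hb⟩ := hEdens y (htsub y hy) (ε/2) (by linarith)
      refine lt_min ha ?_
      by_contra hb0
      push_neg at hb0
      have h0 : volume (ball y (ε/2) \ E) = 0 := le_antisymm hb0 zero_le
      have := measure_le_inter_add_diff volume (ball y (ε/2)) E
      rw [h0, add_zero, Set.inter_comm] at this
      exact absurd (this.trans_lt hb) (lt_irrefl _)
    have hev : ∀ᶠ i in atTop,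
        volume (symmDiff (Ei i) E) < ENNReal.ofReal (c₀ * ω * δ ^ n) ∧
        ∀ y ∈ t, volume (symmDiff (Ei i) E)
          < min (volume (E ∩ ball y (ε/2))) (volume (ball y (ε/2) \ E)) := by
      refine (hL1.eventually_lt_const hApos).and ?_
      rw [eventually_all_finset]
      exact fun y hy => hL1.eventually_lt_const (hab y hy)
    filter_upwards [hev] with i ⟨hi1, hi2⟩
    refine hausdorffDist_le_of_infDist hε.le ?_ ?_
    · -- each point of ∂Ei is ε-close to ∂E
      intro x hx
      by_contra hcon
      push_neg at hcon
      have hdisj : ball x ε ∩ frontier E = ∅ := by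
        ext y
        simp only [Set.mem_inter_iff, mem_ball, Set.mem_empty_iff_false, iff_false, not_and]
        intro hyb hyf
        exact absurd (infDist_le_dist_of_mem hyf) (by rw [dist_comm] at hyb; linarith)
      exact absurd (keyA i x ε hε hx hdisj) (not_le.2 hi1)
    · -- each point of ∂E is ε-close to ∂Ei
      intro x hx
      by_contra hcon
      push_neg at hcon
      have hdisj : ball x ε ∩ frontier (Ei i) = ∅ := by
        ext y
        simp only [Set.mem_inter_iff, mem_ball, Set.mem_empty_iff_false, iff_false, not_and]
        intro hyb hyf
        exact absurd (infDist_le_dist_of_mem hyf) (by rw [dist_comm] at hyb; linarith)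
      obtain ⟨y, hyt, hxy⟩ : ∃ y ∈ t, x ∈ ball y (ε/2) := by
        have := htcov hx
        simpa using this
      have hBsub : ball y (ε/2) ⊆ ball x ε := by
        intro z hz
        rw [mem_ball] at *
        have := dist_triangle z y x
        rw [dist_comm x y] at hxy
        linarith [dist_comm z y ▸ hz]
      rcases ball_dichotomy' (Ei i) x ε hdisj with hcase | hcase
      · have hsub : ball y (ε/2) \ E ⊆ Ei i \ E :=
          fun z hz => ⟨interior_subset (hcase (hBsub hz.1)), hz.2⟩
        have : volume (ball y (ε/2) \ E) ≤ volume (symmDiff (Ei i) E) :=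
          (measure_mono hsub).trans (measure_mono (by rw [Set.symmDiff_def]; exact Set.subset_union_left))
        exact absurd this (not_le.2 ((hi2 y hyt).trans_le (min_le_right _ _)))
      · have hsub : E ∩ ball y (ε/2) ⊆ E \ Ei i := by
          intro z hz
          exact ⟨hz.1, fun hzE => (interior_subset (hcase (hBsub hz.2)) : z ∈ (Ei i)ᶜ) hzE⟩
        have : volume (E ∩ ball y (ε/2)) ≤ volume (symmDiff (Ei i) E) :=
          (measure_mono hsub).trans (measure_mono (by rw [Set.symmDiff_def]; exact Set.subset_union_right))
        exact absurd this (not_le.2 ((hi2 y hyt).trans_le (min_le_left _ _)))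
  -- conclude
  rw [NormedAddCommGroup.tendsto_nhds_zero]
  intro ε hε
  filter_upwards [main (ε/2) (by linarith)] with i hi
  rw [Real.norm_eq_abs, abs_of_nonneg hausdorffDist_nonneg]
  linarith
end

section
/- Let n ∈ ℕ with n ≥ 2 and let v₁, v₂, α₁, α₂ be positive real numbers satisfying α₁ v₂ = α₂ v₁. Define, for real t in a neighborhood of 0, g(t) = (1 − ((1+t)^n − 1)(v₁/v₂))^{1/n} and f(t) = α₁ (1+t)^{n−1} + α₂ g(t)^{n−1}. Then f is twice differentiable at 0 with f''(0) = −(n−1) α₁ (1 + v₁/v₂), and in particular f''(0) < 0. -/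
/-- The volume-preserving dilation factor `g(t) = (1 - ((1+t)^n - 1)·(v₁/v₂))^(1/n)`. -/
noncomputable def gfun (n : ℕ) (ρ : ℝ) (t : ℝ) : ℝ :=
  (1 - ((1 + t) ^ n - 1) * ρ) ^ ((1 : ℝ) / n)

/-- The energy `f(t) = α₁ (1+t)^(n-1) + α₂ g(t)^(n-1)` of the dilated competitor. -/
noncomputable def ffun (n : ℕ) (v₁ v₂ α₁ α₂ : ℝ) (t : ℝ) : ℝ :=
  α₁ * (1 + t) ^ (n - 1) + α₂ * (gfun n (v₁ / v₂) t) ^ (n - 1)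

/-- Second-variation computation from Step 5 of the proof of Theorem 5.3: when
`α₁ v₂ = α₂ v₁`, the energy `f` is twice differentiable at `0` with
`f''(0) = -(n-1)α₁(1 + v₁/v₂) < 0`. -/
theorem stmt_8 (n : ℕ) (hn : 2 ≤ n) (v₁ v₂ α₁ α₂ : ℝ)
    (hv₁ : 0 < v₁) (hv₂ : 0 < v₂) (hα₁ : 0 < α₁) (hα₂ : 0 < α₂)
    (hcrit : α₁ * v₂ = α₂ * v₁) :
    HasDerivAt (deriv (ffun n v₁ v₂ α₁ α₂))
      (-(((n : ℝ) - 1) * α₁ * (1 + v₁ / v₂))) 0 ∧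
    -(((n : ℝ) - 1) * α₁ * (1 + v₁ / v₂)) < 0 := by
  have hn1 : 1 ≤ n := le_trans one_le_two hn
  have hnR : (1:ℝ) < (n:ℝ) := by exact_mod_cast lt_of_lt_of_le one_lt_two hn
  have hn0 : (n:ℝ) ≠ 0 := by linarith
  set ρ : ℝ := v₁ / v₂ with hρdef
  have hρ : 0 < ρ := div_pos hv₁ hv₂
  have hα : α₂ * ρ = α₁ := by
    rw [hρdef]; field_simp; linarith [hcrit]
  set q : ℝ := ((n:ℝ) - 1) / n with hqdef
  set u : ℝ → ℝ := fun t => 1 - ((1 + t) ^ n - 1) * ρ with hudef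
  have hu0 : u 0 = 1 := by simp [hudef]
  have hucont : Continuous u := by
    rw [hudef]; continuity
  have hUopen : IsOpen {t : ℝ | 0 < u t} := isOpen_lt continuous_const hucont
  have hc1 : ((n-1:ℕ):ℝ) = (n:ℝ) - 1 := by
    rw [Nat.cast_sub hn1, Nat.cast_one]
  have hc2 : ((n-1-1:ℕ):ℝ) = (n:ℝ) - 2 := by
    rw [Nat.cast_sub (by omega : 1 ≤ n - 1), Nat.cast_sub hn1]; push_cast; ring
  set F : ℝ → ℝ := fun t =>
    α₁ * (((n-1:ℕ):ℝ) * (1+t)^(n-1-1) * 1)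
      + α₂ * ((-((((n:ℕ):ℝ) * (1+t)^(n-1) * 1) * ρ)) * q * u t ^ (q - 1)) with hFdef
  have hder : ∀ t : ℝ, 0 < u t → HasDerivAt (ffun n v₁ v₂ α₁ α₂) (F t) t := by
    intro t ht
    have h1 : HasDerivAt (fun s : ℝ => 1 + s) 1 t := by
      simpa using (hasDerivAt_id t).const_add (1:ℝ)
    have hud : HasDerivAt u (-((((n:ℕ):ℝ) * (1+t)^(n-1) * 1) * ρ)) t :=
      (((h1.pow n).sub_const 1).mul_const ρ).const_sub 1
    have hq1 : HasDerivAt (fun s => u s ^ q)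
        ((-((((n:ℕ):ℝ) * (1+t)^(n-1) * 1) * ρ)) * q * u t ^ (q-1)) t :=
      hud.rpow_const (Or.inl ht.ne')
    have hmain : HasDerivAt (fun s => α₁ * (1+s)^(n-1) + α₂ * u s ^ q) (F t) t :=
      ((h1.pow (n-1)).const_mul α₁).add (hq1.const_mul α₂)
    refine hmain.congr_of_eventuallyEq ?_
    filter_upwards [hUopen.mem_nhds ht] with s hs
    show ffun n v₁ v₂ α₁ α₂ s = _
    unfold ffun gfun
    rw [← hρdef]
    congr 1
    rw [← Real.rpow_natCast ((u s) ^ ((1:ℝ)/n)) (n-1), ← Real.rpow_mul (le_of_lt hs)]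
    rw [hudef]
    congr 1
    rw [hc1, hqdef]
    field_simp
  have hU0 : {t : ℝ | 0 < u t} ∈ nhds (0:ℝ) := hUopen.mem_nhds (by simp [hu0])
  have hev : deriv (ffun n v₁ v₂ α₁ α₂) =ᶠ[nhds (0:ℝ)] F := by
    filter_upwards [hU0] with t ht
    exact (hder t ht).deriv
  have h1 : HasDerivAt (fun s : ℝ => 1 + s) 1 (0:ℝ) := by
    simpa using (hasDerivAt_id (0:ℝ)).const_add (1:ℝ)
  have hud : HasDerivAt u (-((((n:ℕ):ℝ) * (1+(0:ℝ))^(n-1) * 1) * ρ)) 0 :=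
    (((h1.pow n).sub_const 1).mul_const ρ).const_sub 1
  have hA : HasDerivAt (fun t => u t ^ (q-1))
      ((-((((n:ℕ):ℝ) * (1+(0:ℝ))^(n-1) * 1) * ρ)) * (q-1) * u 0 ^ (q-1-1)) 0 :=
    hud.rpow_const (Or.inl (by rw [hu0]; norm_num))
  have hB : HasDerivAt (fun t : ℝ => (1+t)^(n-1))
      (((n-1:ℕ):ℝ) * (1+(0:ℝ))^(n-1-1) * 1) 0 := h1.pow (n-1)
  have hprod := hA.mul hB
  have hterm1 : HasDerivAt (fun t : ℝ => (1+t)^(n-1-1))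
      (((n-1-1:ℕ):ℝ) * (1+(0:ℝ))^(n-1-1-1) * 1) 0 := h1.pow (n-1-1)
  have hFeq : F = fun t => (α₁ * ((n-1:ℕ):ℝ)) * (1+t)^(n-1-1)
      + (α₂ * q * (-(((n:ℕ):ℝ) * ρ))) * (u t ^ (q-1) * (1+t)^(n-1)) := by
    funext t; rw [hFdef]; ring
  have hmainF : HasDerivAt F
      ((α₁ * ((n-1:ℕ):ℝ)) * (((n-1-1:ℕ):ℝ) * (1+(0:ℝ))^(n-1-1-1) * 1)
        + (α₂ * q * (-(((n:ℕ):ℝ) * ρ))) *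
          (((-((((n:ℕ):ℝ) * (1+(0:ℝ))^(n-1) * 1) * ρ)) * (q-1) * u 0 ^ (q-1-1)) * (1+(0:ℝ))^(n-1)
            + u 0 ^ (q-1) * (((n-1:ℕ):ℝ) * (1+(0:ℝ))^(n-1-1) * 1))) 0 := by
    rw [hFeq]
    exact (hterm1.const_mul _).add (hprod.const_mul _)
  constructor
  · have hval : (α₁ * ((n-1:ℕ):ℝ)) * (((n-1-1:ℕ):ℝ) * (1+(0:ℝ))^(n-1-1-1) * 1)
        + (α₂ * q * (-(((n:ℕ):ℝ) * ρ))) *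
          (((-((((n:ℕ):ℝ) * (1+(0:ℝ))^(n-1) * 1) * ρ)) * (q-1) * u 0 ^ (q-1-1)) * (1+(0:ℝ))^(n-1)
            + u 0 ^ (q-1) * (((n-1:ℕ):ℝ) * (1+(0:ℝ))^(n-1-1) * 1))
        = -(((n : ℝ) - 1) * α₁ * (1 + ρ)) := by
      rw [hu0]
      simp only [Real.one_rpow, one_pow, hc1, hc2, hqdef, Nat.cast_id, mul_one, one_mul]
      rw [← hα]
      field_simp
      ring
    have := hmainF.congr_of_eventuallyEq hev
    rwa [hval] at this
  · have hpos : 0 < ((n:ℝ) - 1) * α₁ * (1 + ρ) := by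
      have : (0:ℝ) < (n:ℝ) - 1 := by linarith
      have h2 : (0:ℝ) < 1 + ρ := by linarith
      positivity
    exact neg_lt_zero.mpr hpos
end

section
/- Let n ≥ 1 and 0 < a ≤ b, and let F : ℝⁿ × ℝⁿ → ℝ be continuous with a‖z‖ ≤ F(x, z) ≤ b‖z‖ for all x, z ∈ ℝⁿ. Let x₁, x₂ ∈ ℝⁿ and let γ̂ : [0,1] → ℝⁿ be a continuously differentiable curve with γ̂(0) = x₁, γ̂(1) = x₂, and ∫₀¹ F(γ̂(t), γ̂'(t)) dt ≤ 2 d_F(x₁, x₂). Then for every t ∈ [0,1] one has ‖γ̂(t) − x₁‖ ≤ (2b/a) ‖x₂ − x₁‖. -/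
/-- The anisotropic distance `d_F(p,q)`: the infimum of `∫₀¹ F(γ(t), γ'(t)) dt` over all
continuously differentiable curves `γ` with `γ 0 = p` and `γ 1 = q`. -/
noncomputable def dF (n : ℕ)
    (F : EuclideanSpace ℝ (Fin n) × EuclideanSpace ℝ (Fin n) → ℝ)
    (p q : EuclideanSpace ℝ (Fin n)) : ℝ :=
  sInf { L : ℝ | ∃ γ : ℝ → EuclideanSpace ℝ (Fin n), ContDiff ℝ 1 γ ∧
    γ 0 = p ∧ γ 1 = q ∧ L = ∫ t in (0:ℝ)..1, F (γ t, deriv γ t) }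

/-- Euclidean form of Lemma 3.4: a near-minimizing curve for the anisotropic length
functional stays in the ball of radius `(2b/a)‖x₂ - x₁‖` around `x₁`. -/
theorem stmt_9 (n : ℕ) (hn : 1 ≤ n) (a b : ℝ) (ha : 0 < a) (hab : a ≤ b)
    (F : EuclideanSpace ℝ (Fin n) × EuclideanSpace ℝ (Fin n) → ℝ)
    (hFcont : Continuous F)
    (hFbd : ∀ x z : EuclideanSpace ℝ (Fin n), a * ‖z‖ ≤ F (x, z) ∧ F (x, z) ≤ b * ‖z‖)
    (x₁ x₂ : EuclideanSpace ℝ (Fin n))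
    (γ : ℝ → EuclideanSpace ℝ (Fin n)) (hγ : ContDiff ℝ 1 γ)
    (hγ0 : γ 0 = x₁) (hγ1 : γ 1 = x₂)
    (hlen : (∫ t in (0:ℝ)..1, F (γ t, deriv γ t)) ≤ 2 * dF n F x₁ x₂) :
    ∀ t ∈ Set.Icc (0:ℝ) 1, ‖γ t - x₁‖ ≤ (2 * b / a) * ‖x₂ - x₁‖ := by
  intro t ht
  obtain ⟨ht0, ht1⟩ := ht
  -- continuity facts about γ
  have hγd : Differentiable ℝ γ := hγ.differentiable one_ne_zero
  have hγ'c : Continuous (deriv γ) := hγ.continuous_deriv le_rfl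
  have hGc : Continuous (fun s => F (γ s, deriv γ s)) :=
    hFcont.comp ((hγ.continuous).prodMk hγ'c)
  have hGint : ∀ u v : ℝ, IntervalIntegrable (fun s => F (γ s, deriv γ s)) MeasureTheory.volume u v :=
    fun u v => (hGc.intervalIntegrable u v)
  -- Step 1: dF ≤ b ‖x₂ - x₁‖ via the straight segment
  have hBdd : BddBelow { L : ℝ | ∃ g : ℝ → EuclideanSpace ℝ (Fin n), ContDiff ℝ 1 g ∧
      g 0 = x₁ ∧ g 1 = x₂ ∧ L = ∫ s in (0:ℝ)..1, F (g s, deriv g s) } := by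
    refine ⟨0, ?_⟩
    rintro L ⟨g, hg, -, -, rfl⟩
    refine intervalIntegral.integral_nonneg zero_le_one ?_
    intro u _
    have := (hFbd (g u) (deriv g u)).1
    have h0 : (0:ℝ) ≤ a * ‖deriv g u‖ := by positivity
    linarith
  set gs : ℝ → EuclideanSpace ℝ (Fin n) := fun s => x₁ + s • (x₂ - x₁) with hgs
  have hgsCD : ContDiff ℝ 1 gs := contDiff_const.add (contDiff_id.smul contDiff_const)
  have hgsd : ∀ s : ℝ, deriv gs s = x₂ - x₁ := by
    intro s
    have h : HasDerivAt gs (x₂ - x₁) s := by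
      have := ((hasDerivAt_id s).smul_const (x₂ - x₁)).const_add x₁
      rw [one_smul] at this
      exact this
    exact h.deriv
  have hLseg : (∫ s in (0:ℝ)..1, F (gs s, deriv gs s)) ≤ b * ‖x₂ - x₁‖ := by
    have hint : IntervalIntegrable (fun s => F (gs s, deriv gs s)) MeasureTheory.volume 0 1 :=
      ((hFcont.comp ((hgsCD.continuous).prodMk (hgsCD.continuous_deriv le_rfl))).intervalIntegrable 0 1)
    calc (∫ s in (0:ℝ)..1, F (gs s, deriv gs s))
        ≤ ∫ s in (0:ℝ)..1, b * ‖x₂ - x₁‖ := by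
          refine intervalIntegral.integral_mono_on zero_le_one hint (intervalIntegrable_const) ?_
          intro u _
          rw [hgsd u]
          exact (hFbd (gs u) (x₂ - x₁)).2
      _ = b * ‖x₂ - x₁‖ := by simp
  have hdF : dF n F x₁ x₂ ≤ b * ‖x₂ - x₁‖ := by
    have hmem : (∫ s in (0:ℝ)..1, F (gs s, deriv gs s)) ∈
        { L : ℝ | ∃ g : ℝ → EuclideanSpace ℝ (Fin n), ContDiff ℝ 1 g ∧
          g 0 = x₁ ∧ g 1 = x₂ ∧ L = ∫ s in (0:ℝ)..1, F (g s, deriv g s) } := by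
      exact ⟨gs, hgsCD, by simp [hgs], by simp [hgs], rfl⟩
    exact le_trans (csInf_le hBdd hmem) hLseg
  -- Step 2: a ‖γ t - x₁‖ ≤ ∫₀¹ F
  have hFTC : γ t - x₁ = ∫ s in (0:ℝ)..t, deriv γ s := by
    rw [← hγ0]
    rw [intervalIntegral.integral_deriv_eq_sub (fun u _ => hγd u)
      (hγ'c.intervalIntegrable 0 t)]
  have hnorm : ‖γ t - x₁‖ ≤ ∫ s in (0:ℝ)..t, ‖deriv γ s‖ := by
    rw [hFTC]
    exact intervalIntegral.norm_integral_le_integral_norm ht0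
  have h1 : a * ‖γ t - x₁‖ ≤ ∫ s in (0:ℝ)..t, a * ‖deriv γ s‖ := by
    have := mul_le_mul_of_nonneg_left hnorm ha.le
    calc a * ‖γ t - x₁‖ ≤ a * ∫ s in (0:ℝ)..t, ‖deriv γ s‖ := this
      _ = ∫ s in (0:ℝ)..t, a * ‖deriv γ s‖ := by
          rw [intervalIntegral.integral_const_mul]
  have h2 : (∫ s in (0:ℝ)..t, a * ‖deriv γ s‖) ≤ ∫ s in (0:ℝ)..t, F (γ s, deriv γ s) := by
    refine intervalIntegral.integral_mono_on ht0 ?_ (hGint 0 t) ?_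
    · exact (continuous_const.mul hγ'c.norm).intervalIntegrable 0 t
    · intro u _; exact (hFbd (γ u) (deriv γ u)).1
  have h3 : (∫ s in (0:ℝ)..t, F (γ s, deriv γ s)) ≤ ∫ s in (0:ℝ)..1, F (γ s, deriv γ s) := by
    rw [← intervalIntegral.integral_add_adjacent_intervals (hGint 0 t) (hGint t 1)]
    have : (0:ℝ) ≤ ∫ s in t..1, F (γ s, deriv γ s) := by
      refine intervalIntegral.integral_nonneg ht1 ?_
      intro u _
      have := (hFbd (γ u) (deriv γ u)).1
      have h0 : (0:ℝ) ≤ a * ‖deriv γ u‖ := by positivity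
      linarith
    linarith
  have key : a * ‖γ t - x₁‖ ≤ 2 * (b * ‖x₂ - x₁‖) := by
    have := hlen
    have h4 : 2 * dF n F x₁ x₂ ≤ 2 * (b * ‖x₂ - x₁‖) := by linarith
    linarith
  rw [div_mul_eq_mul_div, le_div_iff₀ ha]
  nlinarith [key]
end

section
/- Let n ≥ 1, 0 < a ≤ b, and L ≥ 0, and let F : ℝⁿ × ℝⁿ → ℝ be continuous such that: a‖z‖ ≤ F(x, z) ≤ b‖z‖ for all x, z; for each x the function z ↦ F(x, z) is convex and positively 1-homogeneous (F(x, λz) = λ F(x, z) for all λ ≥ 0); and |F(x, z) − F(x', z)| ≤ L‖x − x'‖‖z‖ for all x, x', z. Then there exist constants C > 0 and ρ₁ > 0, depending only on a, b, and L, such that for every ρ ∈ (0, ρ₁] and every z₁, z₂ in the closed ball of radius ρ centered at the origin, (1 − Cρ) F(0, z₂ − z₁) ≤ d_F(z₁, z₂) ≤ (1 + Cρ) F(0, z₂ − z₁). -/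
open MeasureTheory intervalIntegral Set

private lemma aux_combine (D ρ I f : ℝ) (hD0 : 0 ≤ D) (hρ : 0 < ρ) (hInn : 0 ≤ I)
    (hf : 0 ≤ f) (hkey : f ≤ I + D * ρ * I) : (1 - (D + 1) * ρ) * f ≤ I := by
  by_cases hsign : 1 - (D + 1) * ρ ≤ 0
  · calc (1 - (D + 1) * ρ) * f ≤ 0 := mul_nonpos_of_nonpos_of_nonneg hsign hf
      _ ≤ I := hInn
  · push_neg at hsign
    have hstep := mul_le_mul_of_nonneg_left hkey hsign.le
    nlinarith [mul_nonneg hρ.le hInn,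
      mul_nonneg (mul_nonneg hD0 (mul_nonneg hρ.le hρ.le)) hInn,
      mul_nonneg (mul_nonneg (mul_nonneg hD0 hD0) (mul_nonneg hρ.le hρ.le)) hInn]

set_option maxHeartbeats 2000000

/-- Euclidean content of Lemma 3.5: on balls of radius `ρ ≤ ρ₁`, the Finsler distance
`d_F` is, up to a factor `1 ± Cρ`, the frozen-coefficient integrand `F(0, z₂ - z₁)`,
with constants `C, ρ₁` depending only on `a`, `b`, `L`. -/
theorem stmt_10 (a b L : ℝ) (ha : 0 < a) (hab : a ≤ b) (hL : 0 ≤ L) :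
    ∃ C : ℝ, 0 < C ∧ ∃ ρ₁ : ℝ, 0 < ρ₁ ∧
      ∀ (n : ℕ), 1 ≤ n →
      ∀ F : EuclideanSpace ℝ (Fin n) × EuclideanSpace ℝ (Fin n) → ℝ,
        Continuous F →
        (∀ x z : EuclideanSpace ℝ (Fin n), a * ‖z‖ ≤ F (x, z) ∧ F (x, z) ≤ b * ‖z‖) →
        (∀ x : EuclideanSpace ℝ (Fin n), ConvexOn ℝ Set.univ (fun z => F (x, z))) →
        (∀ (x z : EuclideanSpace ℝ (Fin n)) (l : ℝ), 0 ≤ l → F (x, l • z) = l * F (x, z)) →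
        (∀ x x' z : EuclideanSpace ℝ (Fin n), |F (x, z) - F (x', z)| ≤ L * ‖x - x'‖ * ‖z‖) →
        ∀ ρ : ℝ, 0 < ρ → ρ ≤ ρ₁ →
        ∀ z₁ ∈ Metric.closedBall (0 : EuclideanSpace ℝ (Fin n)) ρ,
        ∀ z₂ ∈ Metric.closedBall (0 : EuclideanSpace ℝ (Fin n)) ρ,
          (1 - C * ρ) * F (0, z₂ - z₁) ≤ dF n F z₁ z₂ ∧
          dF n F z₁ z₂ ≤ (1 + C * ρ) * F (0, z₂ - z₁) := by
  have hb : 0 < b := lt_of_lt_of_le ha hab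
  obtain ⟨K, hKdef⟩ : ∃ K : ℝ, K = 1 + 2 * b / a := ⟨_, rfl⟩
  have hK1 : 1 ≤ K := by
    rw [hKdef]
    have : 0 < 2 * b / a := by positivity
    linarith
  obtain ⟨C, hCdef⟩ : ∃ C : ℝ, C = L * K / a + 1 := ⟨_, rfl⟩
  have hC0 : 0 < C := by rw [hCdef]; positivity
  refine ⟨C, hC0, 1, one_pos, ?_⟩
  intro n hn F hFc hFbd hFconv hFhom hFlip ρ hρ hρ1 z₁ hz₁ z₂ hz₂
  have hz₁' : ‖z₁‖ ≤ ρ := by simpa using hz₁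
  have hz₂' : ‖z₂‖ ≤ ρ := by simpa using hz₂
  set w : EuclideanSpace ℝ (Fin n) := z₂ - z₁ with hwdef
  have hwn : ‖w‖ ≤ 2 * ρ := by
    calc ‖w‖ ≤ ‖z₂‖ + ‖z₁‖ := norm_sub_le _ _
    _ ≤ 2 * ρ := by linarith
  have hFnn : ∀ x z : EuclideanSpace ℝ (Fin n), 0 ≤ F (x, z) := fun x z =>
    le_trans (by positivity) (hFbd x z).1
  -- the straight segment
  set γ₀ : ℝ → EuclideanSpace ℝ (Fin n) := fun t => z₁ + t • w with hγ₀def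
  have hγ₀d : ∀ t, HasDerivAt γ₀ w t := fun t => by
    have h := ((hasDerivAt_id t).smul_const w).const_add z₁
    rw [one_smul] at h; exact h
  have hγ₀c : ContDiff ℝ 1 γ₀ := contDiff_const.add (contDiff_id.smul contDiff_const)
  have hγ₀deriv : deriv γ₀ = fun _ => w := funext fun t => (hγ₀d t).deriv
  have hγ₀ball : ∀ t ∈ Icc (0:ℝ) 1, ‖γ₀ t‖ ≤ ρ := by
    intro t ht
    have : γ₀ t = (1 - t) • z₁ + t • z₂ := by
      simp only [hγ₀def, hwdef]; module
    rw [this]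
    calc ‖(1-t) • z₁ + t • z₂‖ ≤ ‖(1-t) • z₁‖ + ‖t • z₂‖ := norm_add_le _ _
      _ = |1-t| * ‖z₁‖ + |t| * ‖z₂‖ := by rw [norm_smul, norm_smul]; simp [Real.norm_eq_abs]
      _ ≤ (1-t) * ρ + t * ρ := by
          rw [abs_of_nonneg (by linarith [ht.2]), abs_of_nonneg ht.1]
          have h1 : (0:ℝ) ≤ 1 - t := by linarith [ht.2]
          have h2 : (0:ℝ) ≤ t := ht.1
          gcongr
      _ = ρ := by ring
  -- membership of the straight segment value
  have hseg_mem : (∫ t in (0:ℝ)..1, F (γ₀ t, deriv γ₀ t)) ∈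
      { I : ℝ | ∃ γ : ℝ → EuclideanSpace ℝ (Fin n), ContDiff ℝ 1 γ ∧
        γ 0 = z₁ ∧ γ 1 = z₂ ∧ I = ∫ t in (0:ℝ)..1, F (γ t, deriv γ t) } := by
    refine ⟨γ₀, hγ₀c, by simp [hγ₀def], by simp [hγ₀def, hwdef], rfl⟩
  -- every admissible value is nonneg
  have hbdd : ∀ I ∈ { I : ℝ | ∃ γ : ℝ → EuclideanSpace ℝ (Fin n), ContDiff ℝ 1 γ ∧
        γ 0 = z₁ ∧ γ 1 = z₂ ∧ I = ∫ t in (0:ℝ)..1, F (γ t, deriv γ t) }, (0:ℝ) ≤ I := by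
    rintro I ⟨γ, hγ, h0, h1, rfl⟩
    exact intervalIntegral.integral_nonneg zero_le_one (fun t _ => hFnn _ _)
  clear_value γ₀ w
  unfold dF
  constructor
  · -- LOWER BOUND
    refine le_csInf ⟨_, hseg_mem⟩ ?_
    rintro I ⟨γ, hγ, h0, h1, rfl⟩
    set v : ℝ → EuclideanSpace ℝ (Fin n) := deriv γ with hvdef
    have hvc : Continuous v := (hγ.continuous_deriv le_rfl)
    have hγc : Continuous γ := hγ.continuous
    set g : ℝ → ℝ := fun t => F (γ t, v t) with hgdef
    have hgc : Continuous g := hFc.comp (hγc.prodMk hvc)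
    have hgint : IntervalIntegrable g volume 0 1 := hgc.intervalIntegrable _ _
    have hvnint : IntervalIntegrable (fun t => ‖v t‖) volume 0 1 :=
      (hvc.norm).intervalIntegrable _ _
    set I : ℝ := ∫ t in (0:ℝ)..1, g t with hIdef
    clear_value I
    have hInn : 0 ≤ I := by
      rw [hIdef]
      exact intervalIntegral.integral_nonneg zero_le_one (fun t _ => hFnn _ _)
    have hlen : a * (∫ t in (0:ℝ)..1, ‖v t‖) ≤ I := by
      rw [hIdef, ← intervalIntegral.integral_const_mul]
      exact intervalIntegral.integral_mono_on zero_le_one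
        ((continuous_const.mul hvc.norm).intervalIntegrable _ _) hgint
        (fun t _ => (hFbd (γ t) (v t)).1)
    have hFTC : ∀ t ∈ Icc (0:ℝ) 1, (∫ s in (0:ℝ)..t, v s) = γ t - γ 0 := by
      intro t ht
      apply intervalIntegral.integral_deriv_eq_sub
      · intro x _; exact (hγ.differentiable one_ne_zero).differentiableAt
      · exact hvc.intervalIntegrable _ _
    have hF0w : a * ‖w‖ ≤ F (0, w) := (hFbd 0 w).1
    have hF0w' : F (0, w) ≤ b * ‖w‖ := (hFbd 0 w).2
    have hF0nn : 0 ≤ F (0, w) := hFnn 0 w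
    by_cases hfar : ∃ t ∈ Icc (0:ℝ) 1, K * ρ < ‖γ t‖
    · obtain ⟨t, ht, htK⟩ := hfar
      have h2 : ‖γ t - γ 0‖ ≤ ∫ s in (0:ℝ)..t, ‖v s‖ := by
        rw [← hFTC t ht]
        exact intervalIntegral.norm_integral_le_integral_norm ht.1
      have h3 : (∫ s in (0:ℝ)..t, ‖v s‖) ≤ ∫ s in (0:ℝ)..1, ‖v s‖ := by
        apply intervalIntegral.integral_mono_interval le_rfl ht.1 ht.2
        · filter_upwards with s using norm_nonneg _
        · exact hvnint
      have h4 : K * ρ - ρ ≤ ‖γ t - γ 0‖ := by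
        have := norm_sub_norm_le (γ t) (γ 0)
        rw [h0] at this ⊢
        linarith
      have h5 : a * (K * ρ - ρ) ≤ I := by
        calc a * (K * ρ - ρ) ≤ a * (∫ s in (0:ℝ)..1, ‖v s‖) := by
              apply mul_le_mul_of_nonneg_left _ ha.le
              linarith
          _ ≤ I := hlen
      have hKρ : a * (K * ρ - ρ) = 2 * b * ρ := by
        rw [hKdef]
        have h : a * (2 * b / a) = 2 * b := by field_simp
        linear_combination ρ * h
      have hFw2 : F (0, w) ≤ 2 * b * ρ := by
        calc F (0, w) ≤ b * ‖w‖ := hF0w'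
          _ ≤ b * (2 * ρ) := by gcongr
          _ = 2 * b * ρ := by ring
      nlinarith [mul_nonneg (mul_nonneg hC0.le hρ.le) hF0nn]
    · push_neg at hfar
      -- Jensen
      haveI hprob : IsProbabilityMeasure (volume.restrict (Set.Ioc (0:ℝ) 1)) := by
        constructor; simp
      have hintw : (∫ s in (0:ℝ)..1, v s) = w := by
        rw [hFTC 1 (by norm_num), h0, h1]; exact hwdef.symm
      have hJensen : F (0, w) ≤ ∫ t in (0:ℝ)..1, F (0, v t) := by
        have hconv := hFconv (0 : EuclideanSpace ℝ (Fin n))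
        have hcont : ContinuousOn (fun z : EuclideanSpace ℝ (Fin n) => F (0, z)) univ :=
          (hFc.comp (continuous_const.prodMk continuous_id)).continuousOn
        have hfi : Integrable v (volume.restrict (Set.Ioc (0:ℝ) 1)) :=
          (hvc.integrableOn_Icc.mono_set Ioc_subset_Icc_self)
        have hcF0v : Continuous (fun t => F (0, v t)) :=
          hFc.comp (continuous_const.prodMk hvc)
        have hgi : Integrable ((fun z => F (0, z)) ∘ v) (volume.restrict (Set.Ioc (0:ℝ) 1)) :=
          (hcF0v.integrableOn_Icc.mono_set Ioc_subset_Icc_self)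
        have hJ := hconv.map_integral_le hcont isClosed_univ
          (Filter.Eventually.of_forall fun x => mem_univ _) hfi hgi
        have hIoc : (∫ x in Set.Ioc (0:ℝ) 1, v x) = w := by
          rw [← intervalIntegral.integral_of_le zero_le_one]; exact hintw
        rw [hIoc] at hJ
        rw [intervalIntegral.integral_of_le zero_le_one]
        exact hJ
      have hpt : ∀ t ∈ Icc (0:ℝ) 1, F (0, v t) - L * (K * ρ) * ‖v t‖ ≤ g t := by
        intro t ht
        have h1 := hFlip (γ t) 0 (v t)
        have h2 := abs_le.mp h1
        have h3 : ‖γ t - 0‖ ≤ K * ρ := by simpa using hfar t ht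
        have h4 : L * ‖γ t - 0‖ * ‖v t‖ ≤ L * (K * ρ) * ‖v t‖ := by
          gcongr
        simp only [hgdef]
        linarith [h2.2]
      have hmain : F (0, w) - L * (K * ρ) * (∫ t in (0:ℝ)..1, ‖v t‖) ≤ I := by
        have hcF0v : Continuous (fun t => F (0, v t)) :=
          hFc.comp (continuous_const.prodMk hvc)
        have hint1 : IntervalIntegrable (fun t => F (0, v t) - L * (K * ρ) * ‖v t‖) volume 0 1 :=
          ((hcF0v.sub (continuous_const.mul hvc.norm)).intervalIntegrable _ _)
        have := intervalIntegral.integral_mono_on zero_le_one hint1 hgint hpt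
        rw [intervalIntegral.integral_sub (g := fun t => L * (K * ρ) * ‖v t‖) (hcF0v.intervalIntegrable _ _)
          ((continuous_const.mul hvc.norm).intervalIntegrable _ _),
          intervalIntegral.integral_const_mul] at this
        linarith [hJensen]
      -- combine: I + (L*K/a)*ρ*I ≥ F(0,w)
      have hvint_le : (∫ t in (0:ℝ)..1, ‖v t‖) ≤ I / a := by
        rw [le_div_iff₀ ha]; linarith [hlen]
      have hvnn : 0 ≤ ∫ t in (0:ℝ)..1, ‖v t‖ :=
        intervalIntegral.integral_nonneg zero_le_one (fun t _ => norm_nonneg _)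
      have hkey : F (0, w) ≤ I + (L * K / a) * ρ * I := by
        have h6 : L * (K * ρ) * (∫ t in (0:ℝ)..1, ‖v t‖) ≤ L * (K * ρ) * (I / a) := by
          apply mul_le_mul_of_nonneg_left hvint_le (by positivity)
        have : L * (K * ρ) * (I / a) = (L * K / a) * ρ * I := by ring
        linarith [hmain]
      obtain ⟨D, hDdef⟩ : ∃ D : ℝ, D = L * K / a := ⟨_, rfl⟩
      have hD0 : 0 ≤ D := by rw [hDdef]; positivity
      have hCD : C = D + 1 := by rw [hCdef, hDdef]
      rw [← hDdef] at hkey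
      rw [hCD]
      exact aux_combine D ρ I (F (0, w)) hD0 hρ hInn hF0nn hkey
  · -- UPPER BOUND
    refine le_trans (csInf_le ⟨0, hbdd⟩ hseg_mem) ?_
    rw [hγ₀deriv]
    have hptu : ∀ t ∈ Icc (0:ℝ) 1, F (γ₀ t, w) ≤ F (0, w) + L * ρ * ‖w‖ := by
      intro t ht
      have h1 := abs_le.mp (hFlip (γ₀ t) 0 w)
      have h2 : L * ‖γ₀ t - 0‖ * ‖w‖ ≤ L * ρ * ‖w‖ := by
        have := hγ₀ball t ht
        gcongr
        simpa using this
      linarith [h1.1]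
    have : (∫ t in (0:ℝ)..1, F (γ₀ t, w)) ≤ ∫ t in (0:ℝ)..1, (F (0, w) + L * ρ * ‖w‖) := by
      apply intervalIntegral.integral_mono_on zero_le_one
        (Continuous.intervalIntegrable (hFc.comp ((hγ₀c.continuous).prodMk continuous_const)) _ _)
        (intervalIntegrable_const) hptu
    rw [intervalIntegral.integral_const] at this
    simp only [sub_zero, smul_eq_mul, one_mul] at this
    have hF0w : a * ‖w‖ ≤ F (0, w) := (hFbd 0 w).1
    have hwnn : 0 ≤ ‖w‖ := norm_nonneg _
    have hLρ : L * ρ * ‖w‖ ≤ C * ρ * F (0, w) := by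
      have h1 : L * ρ * ‖w‖ ≤ (L / a) * ρ * F (0, w) := by
        rw [div_mul_eq_mul_div, div_mul_eq_mul_div, le_div_iff₀ ha]
        nlinarith [mul_le_mul_of_nonneg_left hF0w (mul_nonneg hL hρ.le)]
      have h2 : L / a ≤ C := by
        rw [hCdef]
        have h3 : L ≤ L * K := le_mul_of_one_le_right hL hK1
        have h4 : L / a ≤ L * K / a := by gcongr
        linarith
      calc L * ρ * ‖w‖ ≤ (L/a) * ρ * F (0,w) := h1
        _ ≤ C * ρ * F (0,w) := by
            apply mul_le_mul_of_nonneg_right _ (hFnn 0 w)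
            exact mul_le_mul_of_nonneg_right h2 hρ.le
    linarith
end

section
/- Let n ≥ 1, 0 < m ≤ M, and ε ≥ 0. Let F₁, F₂ : ℝⁿ → ℝ be positively 1-homogeneous functions with m‖ν‖ ≤ F_i(ν) ≤ M‖ν‖ for all ν ∈ ℝⁿ and i = 1, 2, and suppose |F₁(ν) − F₂(ν)| ≤ ε‖ν‖ for all ν. Then the dual functions satisfy |F₁_*(z) − F₂_*(z)| ≤ (ε/m²)‖z‖ for all z ∈ ℝⁿ. -/
/-- The dual function `F_*(z) = sup{⟨z, ν⟩ : F(ν) ≤ 1}` of an integrand `F : ℝⁿ → ℝ`. -/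
noncomputable def dualFn (n : ℕ) (F : EuclideanSpace ℝ (Fin n) → ℝ)
    (z : EuclideanSpace ℝ (Fin n)) : ℝ :=
  sSup { r : ℝ | ∃ ν : EuclideanSpace ℝ (Fin n), F ν ≤ 1 ∧ r = (inner ℝ z ν : ℝ) }

lemma dual_aux (n : ℕ) (m ε : ℝ) (hm : 0 < m) (hε : 0 ≤ ε)
    (F₁ F₂ : EuclideanSpace ℝ (Fin n) → ℝ)
    (hhom₁ : ∀ (l : ℝ), 0 ≤ l → ∀ ν, F₁ (l • ν) = l * F₁ ν)
    (hhom₂ : ∀ (l : ℝ), 0 ≤ l → ∀ ν, F₂ (l • ν) = l * F₂ ν)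
    (hbd₁ : ∀ ν : EuclideanSpace ℝ (Fin n), m * ‖ν‖ ≤ F₁ ν)
    (hbd₂ : ∀ ν : EuclideanSpace ℝ (Fin n), m * ‖ν‖ ≤ F₂ ν)
    (hclose : ∀ ν : EuclideanSpace ℝ (Fin n), F₂ ν - F₁ ν ≤ ε * ‖ν‖)
    (z : EuclideanSpace ℝ (Fin n)) :
    dualFn n F₁ z ≤ dualFn n F₂ z + (ε / m ^ 2) * ‖z‖ := by
  have hF₂0 : F₂ 0 = 0 := by
    have := hhom₂ 0 le_rfl 0
    simpa using this
  have hF₁0 : F₁ 0 = 0 := by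
    have := hhom₁ 0 le_rfl 0
    simpa using this
  have hzero : (0 : ℝ) ∈ { r : ℝ | ∃ ν : EuclideanSpace ℝ (Fin n), F₂ ν ≤ 1 ∧ r = (inner ℝ z ν : ℝ) } := by
    exact ⟨0, by simp [hF₂0]⟩
  have hbdd : ∀ r ∈ { r : ℝ | ∃ ν : EuclideanSpace ℝ (Fin n), F₂ ν ≤ 1 ∧ r = (inner ℝ z ν : ℝ) },
      r ≤ ‖z‖ / m := by
    rintro r ⟨ν, hν, rfl⟩
    have h1 : (inner ℝ z ν : ℝ) ≤ ‖z‖ * ‖ν‖ := real_inner_le_norm z ν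
    have h2 : ‖ν‖ ≤ 1 / m := by
      rw [le_div_iff₀ hm]
      calc ‖ν‖ * m = m * ‖ν‖ := mul_comm _ _
        _ ≤ F₂ ν := hbd₂ ν
        _ ≤ 1 := hν
    calc (inner ℝ z ν : ℝ) ≤ ‖z‖ * ‖ν‖ := h1
      _ ≤ ‖z‖ * (1 / m) := by
          exact mul_le_mul_of_nonneg_left h2 (norm_nonneg z)
      _ = ‖z‖ / m := by ring
  have hbddAbove : BddAbove { r : ℝ | ∃ ν : EuclideanSpace ℝ (Fin n), F₂ ν ≤ 1 ∧ r = (inner ℝ z ν : ℝ) } :=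
    ⟨‖z‖ / m, hbdd⟩
  have hD₂nonneg : 0 ≤ dualFn n F₂ z := le_csSup hbddAbove hzero
  have hD₂le : dualFn n F₂ z ≤ ‖z‖ / m := csSup_le ⟨0, hzero⟩ hbdd
  have hslack : 0 ≤ (ε / m ^ 2) * ‖z‖ :=
    mul_nonneg (div_nonneg hε (by positivity)) (norm_nonneg z)
  have hzero₁ : (0 : ℝ) ∈ { r : ℝ | ∃ ν : EuclideanSpace ℝ (Fin n), F₁ ν ≤ 1 ∧ r = (inner ℝ z ν : ℝ) } :=
    ⟨0, by simp [hF₁0], by simp⟩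
  apply csSup_le ⟨0, hzero₁⟩
  rintro r ⟨ν, hν, rfl⟩
  by_cases hν0 : ν = 0
  · simp [hν0]; linarith
  have hF₂pos : 0 < F₂ ν := lt_of_lt_of_le (mul_pos hm (norm_pos_iff.mpr hν0)) (hbd₂ ν)
  set c := (F₂ ν)⁻¹ with hc
  have hcpos : 0 < c := inv_pos.mpr hF₂pos
  have hmem : (inner ℝ z (c • ν) : ℝ) ∈ { r : ℝ | ∃ ν' : EuclideanSpace ℝ (Fin n), F₂ ν' ≤ 1 ∧ r = (inner ℝ z ν' : ℝ) } := by
    refine ⟨c • ν, ?_, rfl⟩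
    rw [hhom₂ c hcpos.le, hc, inv_mul_cancel₀ hF₂pos.ne']
  have hXle : (inner ℝ z (c • ν) : ℝ) ≤ dualFn n F₂ z := le_csSup hbddAbove hmem
  have hXeq : (inner ℝ z ν : ℝ) = F₂ ν * (inner ℝ z (c • ν) : ℝ) := by
    rw [real_inner_smul_right, hc, mul_inv_cancel_left₀ hF₂pos.ne']
  set X := (inner ℝ z (c • ν) : ℝ)
  rw [hXeq]
  rcases le_or_gt X 0 with hX | hX
  · have : F₂ ν * X ≤ 0 := mul_nonpos_of_nonneg_of_nonpos hF₂pos.le hX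
    linarith
  · have hF₂ub : F₂ ν ≤ 1 + ε / m := by
      have h1 : F₂ ν ≤ F₁ ν + ε * ‖ν‖ := by linarith [hclose ν]
      have h2 : ‖ν‖ ≤ 1 / m := by
        rw [le_div_iff₀ hm]
        calc ‖ν‖ * m = m * ‖ν‖ := mul_comm _ _
          _ ≤ F₁ ν := hbd₁ ν
          _ ≤ 1 := hν
      have : ε * ‖ν‖ ≤ ε * (1 / m) := mul_le_mul_of_nonneg_left h2 hε
      calc F₂ ν ≤ F₁ ν + ε * ‖ν‖ := h1
        _ ≤ 1 + ε * (1 / m) := by linarith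
        _ = 1 + ε / m := by ring
    have hXub : X ≤ ‖z‖ / m := le_trans hXle hD₂le
    calc F₂ ν * X ≤ (1 + ε / m) * X := mul_le_mul_of_nonneg_right hF₂ub hX.le
      _ = X + (ε / m) * X := by ring
      _ ≤ dualFn n F₂ z + (ε / m) * (‖z‖ / m) := by
          have := mul_le_mul_of_nonneg_left hXub (div_nonneg hε hm.le)
          linarith
      _ = dualFn n F₂ z + (ε / m ^ 2) * ‖z‖ := by
          field_simp

/-- Euclidean core of Lemma 3.3: if two positively 1-homogeneous integrands, comparable
to the norm with constants `m ≤ M`, are `ε`-close, then their duals are `ε/m²`-close. -/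
theorem stmt_12 (n : ℕ) (hn : 1 ≤ n) (m M ε : ℝ) (hm : 0 < m) (hmM : m ≤ M) (hε : 0 ≤ ε)
    (F₁ F₂ : EuclideanSpace ℝ (Fin n) → ℝ)
    (hhom₁ : ∀ (l : ℝ), 0 ≤ l → ∀ ν, F₁ (l • ν) = l * F₁ ν)
    (hhom₂ : ∀ (l : ℝ), 0 ≤ l → ∀ ν, F₂ (l • ν) = l * F₂ ν)
    (hbd₁ : ∀ ν : EuclideanSpace ℝ (Fin n), m * ‖ν‖ ≤ F₁ ν ∧ F₁ ν ≤ M * ‖ν‖)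
    (hbd₂ : ∀ ν : EuclideanSpace ℝ (Fin n), m * ‖ν‖ ≤ F₂ ν ∧ F₂ ν ≤ M * ‖ν‖)
    (hclose : ∀ ν : EuclideanSpace ℝ (Fin n), |F₁ ν - F₂ ν| ≤ ε * ‖ν‖) :
    ∀ z : EuclideanSpace ℝ (Fin n),
      |dualFn n F₁ z - dualFn n F₂ z| ≤ (ε / m ^ 2) * ‖z‖ := by
  intro z
  have h12 := dual_aux n m ε hm hε F₁ F₂ hhom₁ hhom₂ (fun ν => (hbd₁ ν).1) (fun ν => (hbd₂ ν).1)
    (fun ν => by have := abs_le.mp (hclose ν); linarith [this.1]) z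
  have h21 := dual_aux n m ε hm hε F₂ F₁ hhom₂ hhom₁ (fun ν => (hbd₂ ν).1) (fun ν => (hbd₁ ν).1)
    (fun ν => by have := abs_le.mp (hclose ν); linarith [this.2]) z
  rw [abs_sub_le_iff]
  constructor <;> linarith
end
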